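/- Let A be an associative algebra, {{-,-}} a double Poisson bracket on A, I ⊂ A a two-sided ideal such that for every x ∈ I and a ∈ A, the single bracket {x,a} = m({{x,a}}) lies in I + [A,A]. Then the formula {ā + I, b̄ + I} := class of {a,b} gives a well-defined Lie bracket on (A/I)/[A/I, A/I], i.e. the single bracket descends to an H_0-Poisson (Lie) structure on the commutator quotient of A/I. -/
import Mathlib


/-!
STATEMENT 16: Let {{-,-}} be a double Poisson bracket on A and I a two-sided ideal
with {I,A} ⊆ I + [A,A] for the single bracket.  Then the single bracket descends to
a well-defined Lie bracket on (A/I)/[A/I, A/I] ≅ A/(I + [A,A]) (an H₀-Poisson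
structure on the commutator quotient of A/I).
-/

namespace Stmt16

open TensorProduct

variable {R A : Type*} [CommRing R] [Ring A] [Algebra R A]

/-- The cyclic permutation τ_(123) on A⊗A⊗A : x⊗y⊗z ↦ z⊗x⊗y. -/
noncomputable def cyc3 (R A : Type*) [CommRing R] [Ring A] [Algebra R A] :
    (A ⊗[R] A) ⊗[R] A →ₗ[R] (A ⊗[R] A) ⊗[R] A :=
  ((TensorProduct.assoc R A A A).symm.toLinearMap).comp
    (TensorProduct.comm R (A ⊗[R] A) A).toLinearMap

/-- The triple bracket associated to a binary operation `D`:
{{a,b,c}} = {{a,{{b,c}}}}_L + τ_(123){{b,{{c,a}}}}_L + τ_(132){{c,{{a,b}}}}_L,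
where {{a,u⊗v}}_L = {{a,u}}⊗v. -/
noncomputable def tripleBr (D : A →ₗ[R] A →ₗ[R] A ⊗[R] A) (a b c : A) :
    (A ⊗[R] A) ⊗[R] A :=
  LinearMap.rTensor A (D a) (D b c)
    + cyc3 R A (LinearMap.rTensor A (D b) (D c a))
    + cyc3 R A (cyc3 R A (LinearMap.rTensor A (D c) (D a b)))

/-- The single bracket {a,b} = m({{a,b}}) associated to `D`. -/
noncomputable def sb (D : A →ₗ[R] A →ₗ[R] A ⊗[R] A) (a b : A) : A :=
  LinearMap.mul' R A (D a b)

/-- The span of commutators. -/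
def commSpan (R A : Type*) [CommRing R] [Ring A] [Algebra R A] : Submodule R A :=
  Submodule.span R {x : A | ∃ u v : A, x = u * v - v * u}

/-! ### Auxiliary machinery -/

/-- Multiplication (A⊗A)⊗A → A, (x⊗y)⊗z ↦ xyz. -/
noncomputable def mu3 (R A : Type*) [CommRing R] [Ring A] [Algebra R A] :
    (A ⊗[R] A) ⊗[R] A →ₗ[R] A :=
  (LinearMap.mul' R A).comp (LinearMap.rTensor A (LinearMap.mul' R A))

/-- Reversed multiplication A⊗A → A, x⊗y ↦ yx. -/
noncomputable def mulRev (R A : Type*) [CommRing R] [Ring A] [Algebra R A] :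
    A ⊗[R] A →ₗ[R] A :=
  (LinearMap.mul' R A).comp (TensorProduct.comm R A A).toLinearMap

@[simp] lemma cyc3_tmul (x y z : A) :
    cyc3 R A ((x ⊗ₜ[R] y) ⊗ₜ[R] z) = (z ⊗ₜ[R] x) ⊗ₜ[R] y := by
  simp [cyc3]

@[simp] lemma mu3_tmul (x y z : A) :
    mu3 R A ((x ⊗ₜ[R] y) ⊗ₜ[R] z) = x * y * z := by
  simp [mu3]

@[simp] lemma mulRev_tmul (x y : A) : mulRev R A (x ⊗ₜ[R] y) = y * x := by
  simp [mulRev]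

lemma cyc3_cyc3_cyc3 (z : (A ⊗[R] A) ⊗[R] A) : cyc3 R A (cyc3 R A (cyc3 R A z)) = z := by
  induction z using TensorProduct.induction_on with
  | zero => simp
  | add x y hx hy => simp [map_add, hx, hy]
  | tmul w v =>
    induction w using TensorProduct.induction_on with
    | zero => simp
    | tmul x y => simp
    | add x y hx hy => simp [add_tmul, map_add, hx, hy]

lemma comm_comm (z : A ⊗[R] A) :
    (TensorProduct.comm R A A) ((TensorProduct.comm R A A) z) = z := by
  induction z using TensorProduct.induction_on with
  | zero => simp
  | tmul x y => simp
  | add x y hx hy => simp [hx, hy]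

lemma mulR (t : A ⊗[R] A) (v : A) :
    LinearMap.mul' R A (t * (1 ⊗ₜ[R] v)) = LinearMap.mul' R A t * v := by
  induction t using TensorProduct.induction_on with
  | zero => simp
  | tmul x y => simp [Algebra.TensorProduct.tmul_mul_tmul, mul_assoc]
  | add x y hx hy => simp [add_mul, hx, hy]

lemma mulL (u : A) (t : A ⊗[R] A) :
    LinearMap.mul' R A ((u ⊗ₜ[R] 1) * t) = u * LinearMap.mul' R A t := by
  induction t using TensorProduct.induction_on with
  | zero => simp
  | tmul x y => simp [Algebra.TensorProduct.tmul_mul_tmul, mul_assoc]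
  | add x y hx hy => simp [mul_add, hx, hy]

lemma mu3_cyc_tmul (w : A ⊗[R] A) (v : A) :
    mu3 R A (cyc3 R A (w ⊗ₜ[R] v)) = v * LinearMap.mul' R A w := by
  induction w using TensorProduct.induction_on with
  | zero => simp
  | tmul x y => simp [mul_assoc]
  | add x y hx hy => simp [add_tmul, map_add, hx, hy, mul_add]

lemma mu3_cyc2_tmul (w : A ⊗[R] A) (v : A) :
    mu3 R A (cyc3 R A (cyc3 R A (w ⊗ₜ[R] v))) = mulRev R A (w * (1 ⊗ₜ[R] v)) := by
  induction w using TensorProduct.induction_on with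
  | zero => simp
  | tmul x y => simp [Algebra.TensorProduct.tmul_mul_tmul, mul_assoc]
  | add x y hx hy => simp [add_tmul, map_add, hx, hy, add_mul]

lemma mulRev_left_right (u : A) (w : A ⊗[R] A) :
    mulRev R A ((u ⊗ₜ[R] 1) * w) = mulRev R A (w * (1 ⊗ₜ[R] u)) := by
  induction w using TensorProduct.induction_on with
  | zero => simp
  | tmul x y => simp [Algebra.TensorProduct.tmul_mul_tmul, mul_assoc]
  | add x y hx hy => simp [mul_add, add_mul, hx, hy]

lemma G0 (f : A →ₗ[R] A ⊗[R] A) (w : A ⊗[R] A) :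
    mu3 R A (LinearMap.rTensor A f w)
      = LinearMap.mul' R A (LinearMap.rTensor A ((LinearMap.mul' R A).comp f) w) := by
  induction w using TensorProduct.induction_on with
  | zero => simp
  | tmul u v => simp [mu3]
  | add x y hx hy => simp [map_add, hx, hy]

lemma G1 (f : A →ₗ[R] A ⊗[R] A) (w : A ⊗[R] A) :
    mu3 R A (cyc3 R A (LinearMap.rTensor A f w))
      = mulRev R A (LinearMap.rTensor A ((LinearMap.mul' R A).comp f) w) := by
  induction w using TensorProduct.induction_on with
  | zero => simp
  | tmul u v => simp [mu3_cyc_tmul]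
  | add x y hx hy => simp [map_add, hx, hy]

lemma Hf (g : A →ₗ[R] A) (t : A ⊗[R] A) :
    LinearMap.mul' R A (LinearMap.lTensor A g t)
      = mulRev R A (LinearMap.rTensor A g ((TensorProduct.comm R A A) t)) := by
  induction t using TensorProduct.induction_on with
  | zero => simp
  | tmul u v => simp
  | add x y hx hy => simp [map_add, hx, hy]

lemma sb_mul (D : A →ₗ[R] A →ₗ[R] A ⊗[R] A)
    (hder : ∀ a b c : A, D a (b * c) = D a b * (1 ⊗ₜ[R] c) + (b ⊗ₜ[R] 1) * D a c)
    (a b c : A) : sb D a (b * c) = sb D a b * c + b * sb D a c := by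
  simp [sb, hder a b c, map_add, mulR, mulL]

lemma Ha (D : A →ₗ[R] A →ₗ[R] A ⊗[R] A)
    (hder : ∀ a b c : A, D a (b * c) = D a b * (1 ⊗ₜ[R] c) + (b ⊗ₜ[R] 1) * D a c)
    (x : A) (t : A ⊗[R] A) :
    LinearMap.mul' R A (D x (LinearMap.mul' R A t))
      = LinearMap.mul' R A (LinearMap.rTensor A ((LinearMap.mul' R A).comp (D x)) t)
      + LinearMap.mul' R A (LinearMap.lTensor A ((LinearMap.mul' R A).comp (D x)) t) := by
  induction t using TensorProduct.induction_on with
  | zero => simp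
  | tmul u v => simp [hder x u v, map_add, mulR, mulL]
  | add p q hp hq =>
    simp only [map_add] at hp hq ⊢
    rw [hp, hq]; abel

lemma Ha2 (D : A →ₗ[R] A →ₗ[R] A ⊗[R] A)
    (hder : ∀ a b c : A, D a (b * c) = D a b * (1 ⊗ₜ[R] c) + (b ⊗ₜ[R] 1) * D a c)
    (x : A) (t : A ⊗[R] A) :
    mulRev R A (D x (LinearMap.mul' R A t))
      = mu3 R A (cyc3 R A (cyc3 R A (LinearMap.rTensor A (D x) t)))
      + mu3 R A (cyc3 R A (cyc3 R A (LinearMap.rTensor A (D x) ((TensorProduct.comm R A A) t)))) := by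
  induction t using TensorProduct.induction_on with
  | zero => simp
  | tmul u v =>
    rw [LinearMap.rTensor_tmul, TensorProduct.comm_tmul, LinearMap.rTensor_tmul,
        mu3_cyc2_tmul, mu3_cyc2_tmul, LinearMap.mul'_apply, hder x u v, map_add,
        mulRev_left_right]
  | add p q hp hq =>
    simp only [map_add] at hp hq ⊢
    rw [hp, hq]; abel

lemma sigmaD (D : A →ₗ[R] A →ₗ[R] A ⊗[R] A)
    (hanti : ∀ a b : A, D a b = - (TensorProduct.comm R A A) (D b a)) (x y : A) :
    (TensorProduct.comm R A A) (D x y) = - D y x := by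
  rw [hanti x y, map_neg, comm_comm]

lemma jacobi (D : A →ₗ[R] A →ₗ[R] A ⊗[R] A)
    (hder : ∀ a b c : A, D a (b * c) = D a b * (1 ⊗ₜ[R] c) + (b ⊗ₜ[R] 1) * D a c)
    (hanti : ∀ a b : A, D a b = - (TensorProduct.comm R A A) (D b a))
    (htriple : ∀ a b c : A, tripleBr D a b c = 0) (a b c : A) :
    sb D a (sb D b c) = sb D (sb D a b) c + sb D b (sb D a c) := by
  set m := LinearMap.mul' R A
  set sa := ((LinearMap.mul' R A).comp (D a))
  set sbb := ((LinearMap.mul' R A).comp (D b))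
  have E1 : m (LinearMap.rTensor A sa (D b c))
      + mulRev R A (LinearMap.rTensor A sbb (D c a))
      + mu3 R A (cyc3 R A (cyc3 R A (LinearMap.rTensor A (D c) (D a b)))) = 0 := by
    have h := congrArg (mu3 R A) (htriple a b c)
    simp only [tripleBr, map_add, map_zero] at h
    rw [G0, G1] at h
    exact h
  have E2 : mulRev R A (LinearMap.rTensor A sa (D c b))
      + mu3 R A (cyc3 R A (cyc3 R A (LinearMap.rTensor A (D c) (D b a))))
      + m (LinearMap.rTensor A sbb (D a c)) = 0 := by
    have h := congrArg (fun z => mu3 R A (cyc3 R A z)) (htriple a c b)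
    simp only [tripleBr, map_add, map_zero] at h
    rw [cyc3_cyc3_cyc3, G1, G0] at h
    exact h
  have h1 : sb D a (sb D b c)
      = m (LinearMap.rTensor A sa (D b c)) - mulRev R A (LinearMap.rTensor A sa (D c b)) := by
    show m (D a (m (D b c))) = _
    rw [Ha D hder a (D b c), Hf, sigmaD D hanti b c, map_neg, map_neg]
    abel
  have h2 : sb D b (sb D a c)
      = m (LinearMap.rTensor A sbb (D a c)) - mulRev R A (LinearMap.rTensor A sbb (D c a)) := by
    show m (D b (m (D a c))) = _
    rw [Ha D hder b (D a c), Hf, sigmaD D hanti a c, map_neg, map_neg]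
    abel
  have h3 : sb D (sb D a b) c
      = - mu3 R A (cyc3 R A (cyc3 R A (LinearMap.rTensor A (D c) (D a b))))
        + mu3 R A (cyc3 R A (cyc3 R A (LinearMap.rTensor A (D c) (D b a)))) := by
    show m (D (m (D a b)) c) = _
    have e1 : D (m (D a b)) c = - (TensorProduct.comm R A A) (D c (m (D a b))) := hanti _ _
    rw [e1, map_neg]
    have e2 : m ((TensorProduct.comm R A A) (D c (m (D a b)))) = mulRev R A (D c (m (D a b))) := rfl
    rw [e2, Ha2 D hder c (D a b), sigmaD D hanti a b, map_neg, map_neg]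
    simp only [map_neg]
    abel
  rw [h1, h2, h3]
  have key : (m (LinearMap.rTensor A sa (D b c)) - mulRev R A (LinearMap.rTensor A sa (D c b)))
      - ((- mu3 R A (cyc3 R A (cyc3 R A (LinearMap.rTensor A (D c) (D a b))))
          + mu3 R A (cyc3 R A (cyc3 R A (LinearMap.rTensor A (D c) (D b a)))))
        + (m (LinearMap.rTensor A sbb (D a c)) - mulRev R A (LinearMap.rTensor A sbb (D c a))))
      = (m (LinearMap.rTensor A sa (D b c))
          + mulRev R A (LinearMap.rTensor A sbb (D c a))
          + mu3 R A (cyc3 R A (cyc3 R A (LinearMap.rTensor A (D c) (D a b)))))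
        - (mulRev R A (LinearMap.rTensor A sa (D c b))
          + mu3 R A (cyc3 R A (cyc3 R A (LinearMap.rTensor A (D c) (D b a))))
          + m (LinearMap.rTensor A sbb (D a c))) := by abel
  rw [E1, E2, sub_zero] at key
  exact sub_eq_zero.mp key

lemma commutator_mem (u v : A) : u * v - v * u ∈ commSpan R A :=
  Submodule.subset_span ⟨u, v, rfl⟩

lemma mul_sub_mulRev_mem (t : A ⊗[R] A) :
    LinearMap.mul' R A t - mulRev R A t ∈ commSpan R A := by
  induction t using TensorProduct.induction_on with
  | zero => simpa using (Submodule.zero_mem (commSpan R A))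
  | tmul u v => simpa using commutator_mem u v
  | add x y hx hy =>
    have := Submodule.add_mem _ hx hy
    simpa [map_add, add_sub_add_comm] using this

theorem H0Poisson_descends {k A : Type*} [Field k] [CharZero k]
    [Ring A] [Algebra k A]
    (D : A →ₗ[k] A →ₗ[k] A ⊗[k] A)
    -- double Poisson bracket
    (hder : ∀ a b c : A, D a (b * c) = D a b * (1 ⊗ₜ[k] c) + (b ⊗ₜ[k] 1) * D a c)
    (hanti : ∀ a b : A, D a b = - (TensorProduct.comm k A A) (D b a))
    (htriple : ∀ a b c : A, tripleBr D a b c = 0)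
    -- a two-sided ideal I
    (I : Ideal A) (hright : ∀ x ∈ I, ∀ a : A, x * a ∈ I)
    -- {I, A} ⊆ I + [A,A]
    (hIA : ∀ x ∈ I, ∀ a : A,
        sb D x a ∈ (Submodule.restrictScalars k I) ⊔ commSpan k A) :
    -- the single bracket descends to a Lie bracket on A/(I + [A,A]) ≅ (A/I)/[A/I,A/I]
    ∃ brL : (A ⧸ ((Submodule.restrictScalars k I) ⊔ commSpan k A)) →ₗ[k]
        (A ⧸ ((Submodule.restrictScalars k I) ⊔ commSpan k A)) →ₗ[k]
        (A ⧸ ((Submodule.restrictScalars k I) ⊔ commSpan k A)),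
      -- well-definedness: it is induced by the single bracket on representatives
      (∀ a b : A,
        brL (Submodule.Quotient.mk a) (Submodule.Quotient.mk b)
          = Submodule.Quotient.mk (sb D a b)) ∧
      -- it is a Lie bracket: alternating ...
      (∀ x, brL x x = 0) ∧
      -- ... and satisfying the Jacobi identity (in Leibniz form)
      (∀ x y z, brL x (brL y z) = brL (brL x y) z + brL y (brL x z)) := by
  set M : Submodule k A := (Submodule.restrictScalars k I) ⊔ commSpan k A with hM
  have hcommM : commSpan k A ≤ M := le_sup_right
  -- antisymmetry mod commutators
  have hP2 : ∀ a b : A, sb D a b + sb D b a ∈ commSpan k A := by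
    intro a b
    have e : sb D a b = - mulRev k A (D b a) := by
      show LinearMap.mul' k A (D a b) = _
      rw [hanti a b, map_neg]; rfl
    have e2 : sb D a b + sb D b a = LinearMap.mul' k A (D b a) - mulRev k A (D b a) := by
      rw [e]; show _ = _ ; rw [sb]; abel
    rw [e2]; exact mul_sub_mulRev_mem _
  -- the single bracket is linear in the second argument
  have hadd2 : ∀ a x y : A, sb D a (x + y) = sb D a x + sb D a y := by
    intro a x y; simp [sb, map_add]
  have hsmul2 : ∀ (c : k) (a x : A), sb D a (c • x) = c • sb D a x := by
    intro c a x; simp [sb, map_smul]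
  have hadd1 : ∀ x y b : A, sb D (x + y) b = sb D x b + sb D y b := by
    intro x y b; simp [sb, map_add]
  -- second argument in commSpan
  have hsb_comm : ∀ a : A, ∀ z ∈ commSpan k A, sb D a z ∈ M := by
    intro a z hz
    induction hz using Submodule.span_induction with
    | mem x hx =>
      obtain ⟨u, v, rfl⟩ := hx
      have : sb D a (u * v - v * u)
          = (sb D a u * v - v * sb D a u) + (u * sb D a v - sb D a v * u) := by
        have : sb D a (u * v - v * u) = sb D a (u * v) - sb D a (v * u) := by
          simp [sb, map_sub]
        rw [this, sb_mul D hder, sb_mul D hder]; abel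
      rw [this]
      exact hcommM (Submodule.add_mem _ (commutator_mem _ _) (commutator_mem _ _))
    | zero => simpa [sb] using Submodule.zero_mem M
    | add x y _ _ hx hy => rw [hadd2]; exact Submodule.add_mem _ hx hy
    | smul c x _ hx => rw [hsmul2]; exact Submodule.smul_mem _ _ hx
  -- second argument in M
  have hsb_right : ∀ a : A, ∀ t ∈ M, sb D a t ∈ M := by
    intro a t ht
    obtain ⟨y, hy, z, hz, rfl⟩ := Submodule.mem_sup.mp ht
    rw [hadd2]
    refine Submodule.add_mem _ ?_ (hsb_comm a z hz)
    have h1 : sb D y a ∈ M := hIA y hy a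
    have h2 : sb D y a + sb D a y ∈ M := hcommM (hP2 y a)
    have : sb D a y = (sb D y a + sb D a y) - sb D y a := by abel
    rw [this]; exact Submodule.sub_mem _ h2 h1
  -- first argument in M
  have hsb_left : ∀ b : A, ∀ t ∈ M, sb D t b ∈ M := by
    intro b t ht
    have h1 : sb D b t ∈ M := hsb_right b t ht
    have h2 : sb D t b + sb D b t ∈ M := hcommM (hP2 t b)
    have : sb D t b = (sb D t b + sb D b t) - sb D b t := by abel
    rw [this]; exact Submodule.sub_mem _ h2 h1
  -- bundle the single bracket as a bilinear map
  let sbL : A →ₗ[k] A →ₗ[k] A :=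
    (LinearMap.llcomp k A (A ⊗[k] A) A (LinearMap.mul' k A)).comp D
  have hsbL : ∀ a b : A, sbL a b = sb D a b := fun a b => rfl
  -- compose with the quotient projection
  let g : A →ₗ[k] A →ₗ[k] (A ⧸ M) :=
    (LinearMap.llcomp k A A (A ⧸ M) M.mkQ).comp sbL
  have hg : ∀ a b : A, g a b = Submodule.Quotient.mk (sb D a b) := fun a b => rfl
  -- descend in the second variable
  have hker2 : ∀ a : A, M ≤ LinearMap.ker (g a) := by
    intro a t ht
    rw [LinearMap.mem_ker, hg, Submodule.Quotient.mk_eq_zero]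
    exact hsb_right a t ht
  let g2 : A →ₗ[k] ((A ⧸ M) →ₗ[k] (A ⧸ M)) :=
    { toFun := fun a => M.liftQ (g a) (hker2 a)
      map_add' := by
        intro x y
        apply LinearMap.ext
        intro q
        obtain ⟨b, rfl⟩ := Submodule.Quotient.mk_surjective M q
        simp [Submodule.liftQ_apply, hg, hadd1]
      map_smul' := by
        intro c x
        apply LinearMap.ext
        intro q
        obtain ⟨b, rfl⟩ := Submodule.Quotient.mk_surjective M q
        simp [Submodule.liftQ_apply, hg, sb, map_smul] }
  have hg2 : ∀ a b : A, g2 a (Submodule.Quotient.mk b) = Submodule.Quotient.mk (sb D a b) := by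
    intro a b
    show M.liftQ (g a) (hker2 a) (Submodule.Quotient.mk b) = _
    rw [Submodule.liftQ_apply, hg]
  -- descend in the first variable
  have hker1 : M ≤ LinearMap.ker g2 := by
    intro t ht
    rw [LinearMap.mem_ker]
    apply LinearMap.ext
    intro q
    obtain ⟨b, rfl⟩ := Submodule.Quotient.mk_surjective M q
    rw [hg2]
    simp only [LinearMap.zero_apply]
    rw [Submodule.Quotient.mk_eq_zero]
    exact hsb_left b t ht
  refine ⟨M.liftQ g2 hker1, ?_, ?_, ?_⟩
  · intro a b
    rw [Submodule.liftQ_apply, hg2]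
  · intro x
    obtain ⟨a, rfl⟩ := Submodule.Quotient.mk_surjective M x
    rw [Submodule.liftQ_apply, hg2, Submodule.Quotient.mk_eq_zero]
    apply hcommM
    have h2 : (2 : k) • sb D a a ∈ commSpan k A := by
      rw [two_smul]; exact hP2 a a
    have h3 := Submodule.smul_mem (commSpan k A) ((2 : k)⁻¹) h2
    have h4 : ((2 : k)⁻¹ • (2 : k) • sb D a a) = sb D a a := by
      rw [smul_smul, inv_mul_cancel₀ (by norm_num : (2:k) ≠ 0), one_smul]
    rwa [h4] at h3
  · intro x y z
    obtain ⟨a, rfl⟩ := Submodule.Quotient.mk_surjective M x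
    obtain ⟨b, rfl⟩ := Submodule.Quotient.mk_surjective M y
    obtain ⟨c, rfl⟩ := Submodule.Quotient.mk_surjective M z
    simp only [Submodule.liftQ_apply, hg2]
    rw [← Submodule.Quotient.mk_add]
    exact congrArg _ (jacobi D hder hanti htriple a b c)

end Stmt16
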